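/- There exists a continuous function ℝ → ℝ that is nowhere differentiable, refuting the 'obvious' claim that every continuous function is differentiable at almost all points. -/

import Mathlib

noncomputable def sdist (x : ℝ) : ℝ := |x - round x|

lemma sdist_int (k : ℤ) : sdist (k : ℝ) = 0 := by
  simp [sdist, round_intCast]

lemma sdist_le (x : ℝ) (m : ℤ) : sdist x ≤ |x - m| := by
  rcases eq_or_ne m (round x) with h | h
  · simp [sdist, h]
  · have h1 : |x - round x| ≤ 1/2 := abs_sub_round x
    have h2 : (1 : ℝ) ≤ |(m : ℝ) - round x| := by
      have : (m : ℝ) - round x ≠ 0 := by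
        simp only [sub_ne_zero]; exact_mod_cast fun hh => h (by exact_mod_cast hh)
      have h4 : (1:ℤ) ≤ |m - round x| := Int.one_le_abs (sub_ne_zero.mpr h)
      calc (1:ℝ) = ((1:ℤ):ℝ) := by norm_num
        _ ≤ ((|m - round x| : ℤ) : ℝ) := by exact_mod_cast h4
        _ = |(m:ℝ) - round x| := by push_cast; ring_nf
    have h3 : |(m:ℝ) - round x| ≤ |x - m| + |x - round x| := by
      have := abs_sub_abs_le_abs_sub ((m:ℝ) - x) ((round x : ℝ) - x)
      calc |(m:ℝ) - round x| = |((m:ℝ) - x) - ((round x:ℝ) - x)| := by ring_nf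
        _ ≤ |(m:ℝ) - x| + |(round x:ℝ) - x| := abs_sub _ _
        _ = |x - m| + |x - round x| := by rw [abs_sub_comm, abs_sub_comm ((round x:ℝ))]
    unfold sdist
    linarith

lemma sdist_half (p : ℤ) : sdist ((p : ℝ) + 1/2) = 1/2 := by
  have h1 : sdist ((p:ℝ) + 1/2) ≤ |((p:ℝ) + 1/2) - p| := sdist_le _ p
  have h2 : round ((p:ℝ) + 1/2) = (⌊(p:ℝ) + 1/2 + 1/2⌋ : ℤ) := round_eq _
  have h3 : (⌊(p:ℝ) + 1/2 + 1/2⌋ : ℤ) = p + 1 := by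
    have : (p:ℝ) + 1/2 + 1/2 = ((p + 1 : ℤ) : ℝ) := by push_cast; ring
    rw [this, Int.floor_intCast]
  unfold sdist
  rw [h2, h3]
  push_cast
  rw [abs_of_nonpos] <;> [skip; linarith]
  ring

lemma sdist_lipschitz (x y : ℝ) : |sdist x - sdist y| ≤ |x - y| := by
  have h1 : sdist x ≤ |x - y| + sdist y := by
    have := sdist_le x (round y)
    have h2 : |x - (round y : ℝ)| ≤ |x - y| + |y - round y| := by
      calc |x - (round y:ℝ)| = |(x - y) + (y - round y)| := by ring_nf
        _ ≤ |x - y| + |y - round y| := abs_add_le _ _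
    unfold sdist at *; linarith
  have h2 : sdist y ≤ |x - y| + sdist x := by
    have := sdist_le y (round x)
    have h3 : |y - (round x : ℝ)| ≤ |x - y| + |x - round x| := by
      calc |y - (round x:ℝ)| = |(y - x) + (x - round x)| := by ring_nf
        _ ≤ |y - x| + |x - round x| := abs_add_le _ _
        _ = |x - y| + |x - round x| := by rw [abs_sub_comm]
    unfold sdist at *; linarith
  rw [abs_sub_le_iff]; constructor <;> linarith

lemma sdist_eq_left {p : ℤ} {x : ℝ} (h1 : (p:ℝ) ≤ x) (h2 : x ≤ p + 1/2) :
    sdist x = x - p := by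
  have hle : sdist x ≤ x - p := by
    have := sdist_le x p
    rwa [abs_of_nonneg (by linarith)] at this
  have hge : x - p ≤ sdist x := by
    unfold sdist
    rcases le_or_gt (round x : ℝ) p with h | h
    · rw [abs_of_nonneg (by linarith)]; linarith
    · have : (p + 1 : ℝ) ≤ round x := by
        have : p + 1 ≤ round x := by exact_mod_cast h
        exact_mod_cast this
      rw [abs_sub_comm, abs_of_nonneg (by linarith)]; linarith
  linarith

lemma sdist_eq_right {p : ℤ} {x : ℝ} (h1 : (p:ℝ) + 1/2 ≤ x) (h2 : x ≤ p + 1) :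
    sdist x = p + 1 - x := by
  have hle : sdist x ≤ p + 1 - x := by
    have := sdist_le x (p+1)
    rw [abs_sub_comm, abs_of_nonneg (by push_cast; linarith)] at this
    push_cast at this; linarith
  have hge : (p:ℝ) + 1 - x ≤ sdist x := by
    unfold sdist
    rcases le_or_gt (round x : ℝ) p with h | h
    · rw [abs_of_nonneg (by linarith)]; linarith
    · have : (p + 1 : ℝ) ≤ round x := by
        have : p + 1 ≤ round x := by exact_mod_cast h
        exact_mod_cast this
      rw [abs_sub_comm, abs_of_nonneg (by linarith)]; linarith
  linarith

lemma sdist_nonneg (x : ℝ) : 0 ≤ sdist x := abs_nonneg _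
lemma sdist_le_half (x : ℝ) : sdist x ≤ 1/2 := abs_sub_round x

noncomputable def tak (x : ℝ) : ℝ := ∑' m : ℕ, sdist (2^m * x) / 2^m

lemma tak_continuous : Continuous tak := by
  apply continuous_tsum (u := fun m : ℕ => (1/2) * (1/2)^m)
  · intro i
    have hs : Continuous sdist := by
      rw [Metric.continuous_iff]
      intro x ε hε
      exact ⟨ε, hε, fun y hy => lt_of_le_of_lt (by
        simpa [Real.dist_eq] using sdist_lipschitz y x) hy⟩
    exact (hs.comp (continuous_const.mul continuous_id)).div_const _
  · exact (summable_geometric_of_lt_one (by norm_num) (by norm_num)).mul_left _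
  · intro n x
    rw [Real.norm_eq_abs, abs_div, abs_of_nonneg (sdist_nonneg _), abs_of_nonneg (by positivity)]
    rw [div_le_iff₀ (by positivity)]
    calc sdist (2^n * x) ≤ 1/2 := sdist_le_half _
      _ = 1/2 * (1/2)^n * 2^n := by rw [mul_assoc, ← mul_pow]; norm_num
      _ ≤ _ := le_refl _

/-- per-scale slope -/
noncomputable def esl (j : ℕ) (k : ℤ) : ℝ := 2^j * (sdist ((k+1)/2^j) - sdist ((k:ℝ)/2^j))

lemma tak_dyadic (n : ℕ) (k : ℤ) :
    tak ((k:ℝ)/2^n) = ∑ m ∈ Finset.range n, sdist ((k:ℝ)/2^(n-m)) / 2^m := by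
  unfold tak
  rw [tsum_eq_sum (s := Finset.range n)]
  · apply Finset.sum_congr rfl
    intro m hm
    have hm' : m < n := Finset.mem_range.mp hm
    have ha : (2:ℝ)^n = 2^(n-m) * 2^m := by rw [← pow_add]; congr 1; omega
    have : (2:ℝ)^m * ((k:ℝ)/2^n) = (k:ℝ)/2^(n-m) := by
      rw [ha]; field_simp
    rw [this]
  · intro m hm
    have hm' : n ≤ m := by simpa using hm
    have ha : (2:ℝ)^m = 2^(m-n) * 2^n := by rw [← pow_add]; congr 1; omega
    have : (2:ℝ)^m * ((k:ℝ)/2^n) = ((2^(m-n) * k : ℤ) : ℝ) := by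
      push_cast
      rw [ha]; field_simp
    rw [this, sdist_int, zero_div]

lemma tak_slope (n : ℕ) (k : ℤ) :
    2^n * (tak (((k:ℝ)+1)/2^n) - tak ((k:ℝ)/2^n)) = ∑ j ∈ Finset.range n, esl (j+1) k := by
  have h1 : ((k:ℝ)+1) = ((k+1 : ℤ) : ℝ) := by push_cast; ring
  rw [h1, tak_dyadic, tak_dyadic, ← Finset.sum_sub_distrib, Finset.mul_sum]
  rw [← Finset.sum_range_reflect]
  apply Finset.sum_congr rfl
  intro m hm
  have hm' : m < n := Finset.mem_range.mp hm
  unfold esl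
  have h2 : n - (n - 1 - m) = m + 1 := by omega
  rw [h2]
  have ha : (2:ℝ)^n = 2^(m+1) * 2^(n-1-m) := by rw [← pow_add]; congr 1; omega
  have hb : ((k:ℝ)+1) = ((k+1 : ℤ) : ℝ) := by push_cast; ring
  rw [hb, ha]
  field_simp

lemma interval_piece (j : ℕ) (hj : 1 ≤ j) (k : ℤ) :
    ∃ p : ℤ, ((p:ℝ) ≤ (k:ℝ)/2^j ∧ ((k:ℝ)+1)/2^j ≤ p + 1/2) ∨
      ((p:ℝ) + 1/2 ≤ (k:ℝ)/2^j ∧ ((k:ℝ)+1)/2^j ≤ p + 1) := by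
  obtain ⟨j', rfl⟩ : ∃ j', j = j' + 1 := ⟨j - 1, by omega⟩
  set q : ℤ := k / 2^j' with hq
  have hmod : 2^j' * q + k % 2^j' = k := Int.mul_ediv_add_emod k (2^j')
  have hr0 : 0 ≤ k % 2^j' := Int.emod_nonneg k (by positivity)
  have hr1 : k % 2^j' < 2^j' := Int.emod_lt_of_pos k (by positivity)
  have hlo : (2^j' * q : ℤ) ≤ k := by omega
  have hhi : (k + 1 : ℤ) ≤ 2^j' * q + 2^j' := by omega
  have hlo' : ((q : ℝ)/2) ≤ (k:ℝ)/2^(j'+1) := by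
    rw [div_le_div_iff₀ (by norm_num) (by positivity)]
    have : ((2^j' * q : ℤ) : ℝ) ≤ (k:ℝ) := by exact_mod_cast hlo
    push_cast at this ⊢
    calc (q:ℝ) * 2^(j'+1) = (2:ℝ)^j' * q * 2 := by ring
      _ ≤ (k:ℝ) * 2 := by linarith
  have hhi' : ((k:ℝ)+1)/2^(j'+1) ≤ ((q:ℝ)+1)/2 := by
    rw [div_le_div_iff₀ (by positivity) (by norm_num)]
    have : ((k + 1 : ℤ) : ℝ) ≤ ((2^j' * q + 2^j' : ℤ) : ℝ) := by exact_mod_cast hhi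
    push_cast at this ⊢
    calc ((k:ℝ)+1) * 2 ≤ ((2:ℝ)^j' * q + 2^j') * 2 := by linarith
      _ = ((q:ℝ)+1) * 2^(j'+1) := by ring
  rcases Int.even_or_odd q with ⟨p, hp⟩ | ⟨p, hp⟩
  · refine ⟨p, Or.inl ⟨?_, ?_⟩⟩
    · calc (p:ℝ) = q/2 := by rw [hp]; push_cast; ring
        _ ≤ _ := hlo'
    · calc ((k:ℝ)+1)/2^(j'+1) ≤ ((q:ℝ)+1)/2 := hhi'
        _ = p + 1/2 := by rw [hp]; push_cast; ring
  · refine ⟨p, Or.inr ⟨?_, ?_⟩⟩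
    · calc (p:ℝ) + 1/2 = q/2 := by rw [hp]; push_cast; ring
        _ ≤ _ := hlo'
    · calc ((k:ℝ)+1)/2^(j'+1) ≤ ((q:ℝ)+1)/2 := hhi'
        _ = p + 1 := by rw [hp]; push_cast; ring

lemma esl_shift (j : ℕ) (hj : 1 ≤ j) (k r : ℤ) (hr : r = 0 ∨ r = 1) :
    esl (j+1) (2*k+r) = esl j k := by
  obtain ⟨p, hp⟩ := interval_piece j hj k
  unfold esl
  set a : ℝ := (k:ℝ)/2^j with ha
  set b : ℝ := ((k:ℝ)+1)/2^j with hb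
  have hab : b - a = 1/2^j := by rw [ha, hb]; field_simp; ring
  have hpos : (0:ℝ) < 1/2^j := by positivity
  have hableq : a ≤ b := by linarith
  have ha' : ((2*k+r : ℤ) : ℝ)/2^(j+1) = a + r/2^(j+1) := by
    rw [ha]; push_cast; field_simp; try ring
  have hb' : (((2*k+r : ℤ) : ℝ)+1)/2^(j+1) = a + (r+1)/2^(j+1) := by
    rw [ha]; push_cast; field_simp; try ring
  have hr0 : (0:ℝ) ≤ r := by rcases hr with h | h <;> simp [h]
  have hr1 : (r:ℝ) + 1 ≤ 2 := by rcases hr with h | h <;> subst h <;> norm_num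
  have hsub1 : a ≤ a + (r:ℝ)/2^(j+1) := by
    have : (0:ℝ) ≤ (r:ℝ)/2^(j+1) := by positivity
    linarith
  have hstep : ((r:ℝ))/2^(j+1) ≤ ((r:ℝ)+1)/2^(j+1) := by
    apply div_le_div_of_nonneg_right (by linarith) (by positivity) |>.trans_eq rfl
  have hsub2 : a + ((r:ℝ)+1)/2^(j+1) ≤ b := by
    have h2 : ((r:ℝ)+1)/2^(j+1) ≤ 2/2^(j+1) :=
      div_le_div_of_nonneg_right hr1 (by positivity) |>.trans_eq rfl
    have h3 : (2:ℝ)/2^(j+1) = 1/2^j := by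
      rw [pow_succ]; field_simp; try ring
    rw [h3] at h2
    linarith
  have hdiff : (a + ((r:ℝ)+1)/2^(j+1)) - (a + (r:ℝ)/2^(j+1)) = 1/2^(j+1) := by
    field_simp; try ring
  rcases hp with ⟨h1, h2⟩ | ⟨h1, h2⟩
  · have e1 : sdist b - sdist a = b - a := by
      rw [sdist_eq_left (h1.trans hableq) h2, sdist_eq_left h1 (hableq.trans h2)]
      ring
    have e2 : sdist (a + ((r:ℝ)+1)/2^(j+1)) - sdist (a + (r:ℝ)/2^(j+1)) = 1/2^(j+1) := by
      rw [sdist_eq_left (p := p) (by linarith) (by linarith),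
        sdist_eq_left (p := p) (by linarith) (by linarith)]
      linarith
    rw [ha', hb', e2, e1, hab]
    field_simp
  · have e1 : sdist b - sdist a = -(b - a) := by
      rw [sdist_eq_right (h1.trans hableq) h2, sdist_eq_right h1 (hableq.trans h2)]
      ring
    have e2 : sdist (a + ((r:ℝ)+1)/2^(j+1)) - sdist (a + (r:ℝ)/2^(j+1)) = -(1/2^(j+1)) := by
      rw [sdist_eq_right (p := p) (by linarith) (by linarith),
        sdist_eq_right (p := p) (by linarith) (by linarith)]
      linarith
    rw [ha', hb', e2, e1, hab]
    field_simp

lemma esl_one_abs (k : ℤ) : |esl 1 k| = 1 := by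
  rcases Int.even_or_odd k with ⟨p, hp⟩ | ⟨p, hp⟩
  · have h1 : ((k:ℝ)+1)/2^1 = (p:ℝ) + 1/2 := by subst hp; push_cast; ring
    have h2 : ((k:ℝ))/2^1 = ((p:ℤ):ℝ) := by subst hp; push_cast; ring
    unfold esl
    rw [h1, h2, sdist_half, sdist_int]
    norm_num
  · have h1 : ((k:ℝ)+1)/2^1 = (((p+1:ℤ)):ℝ) := by subst hp; push_cast; ring
    have h2 : ((k:ℝ))/2^1 = (p:ℝ) + 1/2 := by subst hp; push_cast; ring
    unfold esl
    rw [h1, h2, sdist_half, sdist_int]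
    norm_num

lemma slope_sum_succ (n : ℕ) (k r : ℤ) (hr : r = 0 ∨ r = 1) :
    ∑ j ∈ Finset.range (n+1), esl (j+1) (2*k+r)
      = esl 1 (2*k+r) + ∑ j ∈ Finset.range n, esl (j+1) k := by
  rw [Finset.sum_range_succ' (fun j => esl (j+1) (2*k+r)) n]
  rw [add_comm]
  congr 1
  apply Finset.sum_congr rfl
  intro j _
  exact esl_shift (j+1) (by omega) k r hr

theorem exists_continuous_nowhere_differentiable :
    ∃ f : ℝ → ℝ, Continuous f ∧ ∀ x : ℝ, ¬ DifferentiableAt ℝ f x := by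
  refine ⟨tak, tak_continuous, fun x hdiff => ?_⟩
  set L : ℝ := deriv tak x with hL
  have hd : HasDerivAt tak L x := hdiff.hasDerivAt
  rw [hasDerivAt_iff_isLittleO] at hd
  have hev := hd.def (c := 1/8) (by norm_num)
  rw [Metric.eventually_nhds_iff] at hev
  obtain ⟨δ, hδ, hball⟩ := hev
  -- choose n with 2⁻ⁿ < δ
  obtain ⟨n₀, hn₀⟩ := exists_pow_lt_of_lt_one hδ (by norm_num : (1:ℝ)/2 < 1)
  -- slope at scale n
  set sl : ℕ → ℝ := fun n => ∑ j ∈ Finset.range n, esl (j+1) ⌊2^n * x⌋ with hsl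
  have key : ∀ n, n₀ ≤ n → |sl n - L| ≤ 1/8 := by
    intro n hn
    set k : ℤ := ⌊2^n * x⌋ with hk
    have hu : (k:ℝ)/2^n ≤ x := by
      rw [div_le_iff₀ (by positivity)]
      calc (k:ℝ) ≤ 2^n * x := Int.floor_le _
        _ = x * 2^n := by ring
    have hv : x < ((k:ℝ)+1)/2^n := by
      rw [lt_div_iff₀ (by positivity)]
      calc x * 2^n = 2^n * x := by ring
        _ < k + 1 := Int.lt_floor_add_one _
    have hlen : ((k:ℝ)+1)/2^n - (k:ℝ)/2^n = 1/2^n := by field_simp; ring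
    have hsmall : (1:ℝ)/2^n < δ := by
      calc (1:ℝ)/2^n = (1/2)^n := by rw [div_pow]; norm_num
        _ ≤ (1/2)^n₀ := pow_le_pow_of_le_one (by norm_num) (by norm_num) hn
        _ < δ := hn₀
    have hb1 : dist (((k:ℝ)+1)/2^n) x < δ := by
      rw [Real.dist_eq, abs_of_nonneg (by linarith)]
      linarith
    have hb2 : dist ((k:ℝ)/2^n) x < δ := by
      rw [Real.dist_eq, abs_of_nonpos (by linarith)]
      linarith
    have e1 := hball hb1
    have e2 := hball hb2
    simp only [Real.norm_eq_abs, smul_eq_mul] at e1 e2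
    have hsum : |tak (((k:ℝ)+1)/2^n) - tak ((k:ℝ)/2^n) - (1/2^n) * L| ≤ (1/8) * (1/2^n) := by
      have habs : |(((k:ℝ)+1)/2^n - x)| + |((k:ℝ)/2^n - x)| = 1/2^n := by
        rw [abs_of_nonneg (by linarith), abs_of_nonpos (by linarith)]
        linarith
      calc |tak (((k:ℝ)+1)/2^n) - tak ((k:ℝ)/2^n) - (1/2^n) * L|
          = |(tak (((k:ℝ)+1)/2^n) - tak x - ((((k:ℝ)+1)/2^n - x)) * L)
              - (tak ((k:ℝ)/2^n) - tak x - (((k:ℝ)/2^n - x)) * L)| := by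
            congr 1; rw [← hlen]; ring
        _ ≤ |tak (((k:ℝ)+1)/2^n) - tak x - ((((k:ℝ)+1)/2^n - x)) * L|
              + |tak ((k:ℝ)/2^n) - tak x - (((k:ℝ)/2^n - x)) * L| := abs_sub _ _
        _ ≤ (1/8) * |(((k:ℝ)+1)/2^n - x)| + (1/8) * |((k:ℝ)/2^n - x)| := add_le_add e1 e2
        _ = (1/8) * (1/2^n) := by rw [← habs]; ring
    have hslval : sl n = 2^n * (tak (((k:ℝ)+1)/2^n) - tak ((k:ℝ)/2^n)) := (tak_slope n k).symm
    rw [hslval]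
    calc |2^n * (tak (((k:ℝ)+1)/2^n) - tak ((k:ℝ)/2^n)) - L|
        = 2^n * |tak (((k:ℝ)+1)/2^n) - tak ((k:ℝ)/2^n) - (1/2^n) * L| := by
          rw [← abs_of_pos (show (0:ℝ) < 2^n by positivity), ← abs_mul]
          congr 1
          rw [abs_of_pos (show (0:ℝ) < 2^n by positivity), mul_sub ((2:ℝ)^n) _ ((1/2^n) * L),
            ← mul_assoc, mul_one_div_cancel (by positivity), one_mul]
      _ ≤ 2^n * ((1/8) * (1/2^n)) := by
          apply mul_le_mul_of_nonneg_left hsum (by positivity)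
      _ = 1/8 := by field_simp
  -- relation between consecutive slopes
  have hrel : ∀ n, |sl (n+1) - sl n| = 1 := by
    intro n
    set k : ℤ := ⌊2^n * x⌋ with hk
    set k' : ℤ := ⌊2^(n+1) * x⌋ with hk'
    have h2k : 2*k ≤ k' := by
      rw [hk', Int.le_floor]
      push_cast
      have hf := Int.floor_le ((2:ℝ)^n * x)
      have hpow : (2:ℝ)^(n+1) * x = 2 * (2^n * x) := by ring
      rw [hpow]
      linarith
    have h2k' : k' ≤ 2*k + 1 := by
      have : (k':ℝ) ≤ 2^(n+1) * x := Int.floor_le _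
      have h3 : (2:ℝ)^(n+1) * x < 2 * (k+1) := by
        have := Int.lt_floor_add_one ((2:ℝ)^n * x)
        calc (2:ℝ)^(n+1) * x = 2 * (2^n * x) := by ring
          _ < 2 * ((k:ℝ)+1) := by linarith
      have : (k':ℝ) < 2*(k:ℝ) + 2 := by linarith
      have : k' < 2*k + 2 := by exact_mod_cast this
      omega
    set r : ℤ := k' - 2*k with hrdef
    have hr : r = 0 ∨ r = 1 := by omega
    have hkk : k' = 2*k + r := by omega
    have : sl (n+1) = esl 1 k' + sl n := by
      rw [hsl]
      simp only []
      rw [show (⌊2^(n+1) * x⌋ : ℤ) = k' from rfl, hkk]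
      exact slope_sum_succ n k r hr
    rw [this]
    simp only [add_sub_cancel_right]
    rw [hkk]
    exact esl_one_abs _
  have h1 := key n₀ le_rfl
  have h2 := key (n₀+1) (by omega)
  have h3 := hrel n₀
  have : |sl (n₀+1) - sl n₀| ≤ 1/4 := by
    calc |sl (n₀+1) - sl n₀| = |(sl (n₀+1) - L) - (sl n₀ - L)| := by ring_nf
      _ ≤ |sl (n₀+1) - L| + |sl n₀ - L| := abs_sub _ _
      _ ≤ 1/8 + 1/8 := add_le_add h2 h1
      _ = 1/4 := by norm_num
  rw [h3] at this
  norm_num at this
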